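/- Let E be a real inner product space and F : E → ℝ differentiable with gradient ∇F satisfying ‖∇F(x) − ∇F(y)‖² ≤ L·‖x − y‖² for all x, y ∈ E, where L > 0. Let K ≥ 1 be a natural number, η > 0 with 3η²L ≤ 1/(2K), and κ, σ ≥ 0; set δ̇ := 3(κ² + σ²). Let w ∈ E and let w_0 = w, w_{k+1} = w_k − g_k for k = 0,…,K−1, where for each k there is a vector v_k ∈ E with ‖g_k − η·v_k‖² ≤ η²κ² and ‖v_k − ∇F(w_k)‖² ≤ σ². Then for every k with 0 ≤ k ≤ K−1, ‖g_k − η·∇F(w)‖² ≤ 3η⁴·L·e·2^{K+1}·((1 + 2K)·‖∇F(w)‖² + δ̇) + η²·δ̇, where e is Euler's number. -/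
import Mathlib

private lemma sq_norm_add₃ {E : Type*} [NormedAddCommGroup E] (a b c : E) :
    ‖a + b + c‖ ^ 2 ≤ 3 * (‖a‖ ^ 2 + ‖b‖ ^ 2 + ‖c‖ ^ 2) := by
  have h := norm_add₃_le (a := a) (b := b) (c := c)
  nlinarith [norm_nonneg a, norm_nonneg b, norm_nonneg c, norm_nonneg (a + b + c),
    sq_nonneg (‖a‖ - ‖b‖), sq_nonneg (‖a‖ - ‖c‖), sq_nonneg (‖b‖ - ‖c‖)]

private lemma sq_norm_add₂ {E : Type*} [NormedAddCommGroup E] (a b : E) :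
    ‖a + b‖ ^ 2 ≤ 2 * (‖a‖ ^ 2 + ‖b‖ ^ 2) := by
  have h := norm_add_le a b
  nlinarith [norm_nonneg a, norm_nonneg b, norm_nonneg (a + b), sq_nonneg (‖a‖ - ‖b‖)]

set_option maxHeartbeats 1000000 in
/-- **Lemma 2 (Bounded Local Approximation)** in deterministic form: each
local update vector `g k` deviates from the scaled global gradient
`η • ∇F(w₀)` at the anchor by at most the stated bound. -/
theorem local_approximation_bound
    {E : Type*} [NormedAddCommGroup E] [InnerProductSpace ℝ E] [CompleteSpace E]
    (F : E → ℝ) (F' : E → E) (hgrad : ∀ x, HasGradientAt F (F' x) x)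
    (L : ℝ) (hL : 0 < L)
    (hLip : ∀ x y : E, ‖F' x - F' y‖ ^ 2 ≤ L * ‖x - y‖ ^ 2)
    (K : ℕ) (hK : 1 ≤ K) (η : ℝ) (hη : 0 < η)
    (hstep : 3 * η ^ 2 * L ≤ 1 / (2 * (K : ℝ)))
    (κ σ : ℝ) (hκ : 0 ≤ κ) (hσ : 0 ≤ σ)
    (δ : ℝ) (hδ : δ = 3 * (κ ^ 2 + σ ^ 2))
    (w₀ : E) (wseq : ℕ → E) (g v : ℕ → E)
    (hw0 : wseq 0 = w₀)
    (hrec : ∀ k < K, wseq (k + 1) = wseq k - g k)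
    (hg : ∀ k < K, ‖g k - η • v k‖ ^ 2 ≤ η ^ 2 * κ ^ 2)
    (hv : ∀ k < K, ‖v k - F' (wseq k)‖ ^ 2 ≤ σ ^ 2) :
    ∀ k < K, ‖g k - η • F' w₀‖ ^ 2 ≤
      3 * η ^ 4 * L * Real.exp 1 * 2 ^ (K + 1) * ((1 + 2 * (K : ℝ)) * ‖F' w₀‖ ^ 2 + δ) + η ^ 2 * δ := by
  have hδ0 : 0 ≤ δ := by nlinarith [sq_nonneg κ, sq_nonneg σ]
  have hKpos : (0 : ℝ) < K := by exact_mod_cast hK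
  set G : ℝ := ‖F' w₀‖ ^ 2 with hG
  have hG0 : 0 ≤ G := sq_nonneg _
  set C : ℝ := 4 * η ^ 2 * (δ + G) with hC
  have hC0 : 0 ≤ C := by positivity
  set r : ℝ := 2 + 12 * η ^ 2 * L with hr
  have hr2 : (2 : ℝ) ≤ r := by nlinarith [sq_nonneg η]
  have hr0 : (0 : ℝ) ≤ r := by linarith
  have hr1 : (1 : ℝ) ≤ r := by linarith
  -- pointwise bound in terms of the drift
  have ha : ∀ k < K, ‖g k - η • F' w₀‖ ^ 2 ≤
      η ^ 2 * δ + 3 * η ^ 2 * L * ‖wseq k - w₀‖ ^ 2 := by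
    intro k hk
    have hdecomp : g k - η • F' w₀ =
        (g k - η • v k) + η • (v k - F' (wseq k)) + η • (F' (wseq k) - F' w₀) := by
      simp [smul_sub]
    have h3 := sq_norm_add₃ (g k - η • v k) (η • (v k - F' (wseq k))) (η • (F' (wseq k) - F' w₀))
    have h1 := hg k hk
    have hsmul : ∀ x : E, ‖η • x‖ ^ 2 = η ^ 2 * ‖x‖ ^ 2 := by
      intro x; rw [norm_smul, Real.norm_eq_abs, mul_pow, sq_abs]
    have h2 : ‖η • (v k - F' (wseq k))‖ ^ 2 ≤ η ^ 2 * σ ^ 2 := by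
      rw [hsmul]; exact mul_le_mul_of_nonneg_left (hv k hk) (sq_nonneg η)
    have h4 : ‖η • (F' (wseq k) - F' w₀)‖ ^ 2 ≤ η ^ 2 * (L * ‖wseq k - w₀‖ ^ 2) := by
      rw [hsmul]; exact mul_le_mul_of_nonneg_left (hLip (wseq k) w₀) (sq_nonneg η)
    rw [hdecomp]
    nlinarith [h3, h1, h2, h4]
  -- drift recursion
  have hD : ∀ k ≤ K, ‖wseq k - w₀‖ ^ 2 ≤ C * (r ^ k - 1) := by
    intro k
    induction k with
    | zero => intro _; simp [hw0]
    | succ k ih =>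
      intro hk1
      have hk : k < K := hk1
      have ihk := ih (le_of_lt hk)
      have hgk : ‖g k‖ ^ 2 ≤ 2 * ((η ^ 2 * δ + 3 * η ^ 2 * L * ‖wseq k - w₀‖ ^ 2) + η ^ 2 * G) := by
        have hd : g k = (g k - η • F' w₀) + η • F' w₀ := by abel
        have h2 := sq_norm_add₂ (g k - η • F' w₀) (η • F' w₀)
        have hsmul : ‖η • F' w₀‖ ^ 2 = η ^ 2 * G := by
          rw [norm_smul, Real.norm_eq_abs, mul_pow, sq_abs]
        rw [← hd, hsmul] at h2
        nlinarith [ha k hk, h2]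
      have hstep2 : ‖wseq (k + 1) - w₀‖ ^ 2 ≤ 2 * (‖wseq k - w₀‖ ^ 2 + ‖g k‖ ^ 2) := by
        rw [hrec k hk]
        have he : wseq k - g k - w₀ = (wseq k - w₀) + (- g k) := by abel
        rw [he]
        simpa using sq_norm_add₂ (wseq k - w₀) (- g k)
      have hCr : 0 ≤ C * (r - 2) := mul_nonneg hC0 (by linarith)
      have h5 : ‖wseq (k + 1) - w₀‖ ^ 2 ≤ r * ‖wseq k - w₀‖ ^ 2 + C := by
        rw [hr, hC]; linarith [hstep2, hgk]
      have h6 : r * ‖wseq k - w₀‖ ^ 2 ≤ r * (C * (r ^ k - 1)) :=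
        mul_le_mul_of_nonneg_left ihk hr0
      calc ‖wseq (k + 1) - w₀‖ ^ 2 ≤ r * ‖wseq k - w₀‖ ^ 2 + C := h5
        _ ≤ r * (C * (r ^ k - 1)) + C := by linarith
        _ ≤ C * (r ^ (k + 1) - 1) := by rw [pow_succ]; nlinarith [hCr]
  -- growth bound for r^(K-1)
  have hrle : r ≤ 2 * (1 + 1 / (K : ℝ)) := by
    have h2 : 3 * η ^ 2 * L * (2 * (K : ℝ)) ≤ 1 := by
      rw [← le_div_iff₀ (by positivity)]; exact hstep
    have he : 2 * (1 + 1 / (K : ℝ)) = 2 + 2 / (K : ℝ) := by ring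
    have h3 : 12 * η ^ 2 * L ≤ 2 / (K : ℝ) := by
      rw [le_div_iff₀ hKpos]; nlinarith
    rw [hr, he]; linarith
  have hexp : (1 + 1 / (K : ℝ)) ^ (K - 1) ≤ Real.exp 1 := by
    have hb : (1 + 1 / (K : ℝ)) ≤ Real.exp (1 / (K : ℝ)) := by
      have := Real.add_one_le_exp (1 / (K : ℝ)); linarith
    have h0 : (0 : ℝ) ≤ 1 + 1 / (K : ℝ) := by positivity
    have h1e : (1 : ℝ) ≤ Real.exp (1 / (K : ℝ)) := by
      have h01 : (0 : ℝ) ≤ 1 / (K : ℝ) := by positivity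
      have := Real.add_one_le_exp (1 / (K : ℝ)); linarith
    calc (1 + 1 / (K : ℝ)) ^ (K - 1) ≤ Real.exp (1 / (K : ℝ)) ^ (K - 1) :=
          pow_le_pow_left₀ h0 hb _
      _ ≤ Real.exp (1 / (K : ℝ)) ^ K := pow_le_pow_right₀ h1e (Nat.pred_le K)
      _ = Real.exp ((K : ℝ) * (1 / (K : ℝ))) := (Real.exp_nat_mul _ K).symm
      _ = Real.exp 1 := by congr 1; field_simp
  have hrK : r ^ (K - 1) ≤ 2 ^ (K - 1) * Real.exp 1 := by
    calc r ^ (K - 1) ≤ (2 * (1 + 1 / (K : ℝ))) ^ (K - 1) := pow_le_pow_left₀ hr0 hrle _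
      _ = 2 ^ (K - 1) * (1 + 1 / (K : ℝ)) ^ (K - 1) := mul_pow _ _ _
      _ ≤ 2 ^ (K - 1) * Real.exp 1 := by
          exact mul_le_mul_of_nonneg_left hexp (by positivity)
  -- conclusion
  intro k hk
  have hk' : k ≤ K - 1 := Nat.le_pred_of_lt hk
  have hDk := hD k (le_of_lt hk)
  have hpk : r ^ k ≤ r ^ (K - 1) := pow_le_pow_right₀ hr1 hk'
  have hdrift : ‖wseq k - w₀‖ ^ 2 ≤ C * (2 ^ (K - 1) * Real.exp 1) := by
    calc ‖wseq k - w₀‖ ^ 2 ≤ C * (r ^ k - 1) := hDk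
      _ ≤ C * (2 ^ (K - 1) * Real.exp 1) := by
          apply mul_le_mul_of_nonneg_left _ hC0
          have := le_trans hpk hrK; linarith
  have hak := ha k hk
  have hdrift' : 3 * η ^ 2 * L * ‖wseq k - w₀‖ ^ 2 ≤
      3 * η ^ 2 * L * (C * (2 ^ (K - 1) * Real.exp 1)) :=
    mul_le_mul_of_nonneg_left hdrift (by positivity)
  have hpow2 : (2 : ℝ) ^ (K + 1) = 4 * 2 ^ (K - 1) := by
    rw [show K + 1 = (K - 1) + 2 by omega, pow_add]; ring
  have hfin : 3 * η ^ 2 * L * (C * (2 ^ (K - 1) * Real.exp 1)) ≤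
      3 * η ^ 4 * L * Real.exp 1 * 2 ^ (K + 1) * ((1 + 2 * (K : ℝ)) * G + δ) := by
    rw [hC, hpow2]
    have hT : 0 ≤ η ^ 4 * L * Real.exp 1 * 2 ^ (K - 1) * ((K : ℝ) * G) := by positivity
    nlinarith [hT]
  linarith [hak, hdrift', hfin]
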